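/- Let Q₀ and Q₁ be probability measures on X, let θ > 0 satisfy 2θ < ‖μ_{Q₀} − μ_{Q₁}‖_H, let 𝒫₀ and 𝒫₁ be the MMD uncertainty sets of radius θ centered at Q₀ and Q₁ respectively, and let γ ∈ (−‖μ_{Q₀} − μ_{Q₁}‖_H + 2θ, ‖μ_{Q₀} − μ_{Q₁}‖_H − 2θ). Then for every probability measure R on X: (inf over P ∈ 𝒫₀ of ‖μ_R − μ_P‖_H) − (inf over P ∈ 𝒫₁ of ‖μ_R − μ_P‖_H) ≥ γ if and only if ‖μ_R − μ_{Q₀}‖_H − ‖μ_R − μ_{Q₁}‖_H ≥ γ. -/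

import Mathlib

open MeasureTheory
open scoped ENNReal

lemma mmd_inf_eq
    {X H : Type*} [MeasurableSpace X]
    [NormedAddCommGroup H] [InnerProductSpace ℝ H] [CompleteSpace H]
    (Φ : X → H) (hΦm : StronglyMeasurable Φ) (C : ℝ) (hΦb : ∀ x, ‖Φ x‖ ≤ C)
    (Q R : Measure X) [IsProbabilityMeasure Q] [IsProbabilityMeasure R]
    (θ : ℝ) (hθ : 0 < θ) :
    (⨅ P : ↥{P : Measure X | IsProbabilityMeasure P ∧ ‖(∫ x, Φ x ∂P) - (∫ x, Φ x ∂Q)‖ ≤ θ},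
      ‖(∫ x, Φ x ∂ R) - (∫ x, Φ x ∂(P : Measure X))‖)
      = max (‖(∫ x, Φ x ∂ R) - (∫ x, Φ x ∂Q)‖ - θ) 0 := by
  have hint : ∀ (P : Measure X), IsProbabilityMeasure P → Integrable Φ P := fun P hP =>
    (integrable_const C).mono' hΦm.aestronglyMeasurable (Filter.Eventually.of_forall hΦb)
  set d : ℝ := ‖(∫ x, Φ x ∂ R) - (∫ x, Φ x ∂Q)‖ with hd
  haveI : Nonempty ↥{P : Measure X | IsProbabilityMeasure P ∧ ‖(∫ x, Φ x ∂P) - (∫ x, Φ x ∂Q)‖ ≤ θ} :=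
    ⟨⟨Q, ⟨inferInstance, by simp [hθ.le]⟩⟩⟩
  have hbdd : BddBelow (Set.range fun P : ↥{P : Measure X | IsProbabilityMeasure P ∧ ‖(∫ x, Φ x ∂P) - (∫ x, Φ x ∂Q)‖ ≤ θ} =>
      ‖(∫ x, Φ x ∂ R) - (∫ x, Φ x ∂(P : Measure X))‖) :=
    ⟨0, by rintro y ⟨i, rfl⟩; exact norm_nonneg _⟩
  apply le_antisymm
  · rcases le_or_gt d θ with hdθ | hdθ
    · rw [max_eq_right (by linarith)]
      have : (⨅ P : ↥{P : Measure X | IsProbabilityMeasure P ∧ ‖(∫ x, Φ x ∂P) - (∫ x, Φ x ∂Q)‖ ≤ θ},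
          ‖(∫ x, Φ x ∂ R) - (∫ x, Φ x ∂(P : Measure X))‖)
          ≤ ‖(∫ x, Φ x ∂ R) - (∫ x, Φ x ∂ R)‖ :=
        ciInf_le hbdd ⟨R, ⟨inferInstance, hdθ⟩⟩
      simpa using this
    · rw [max_eq_left (by linarith)]
      have hd0 : 0 < d := lt_trans hθ hdθ
      set t : ℝ := θ / d with ht
      have ht0 : 0 < t := div_pos hθ hd0
      have ht1 : t < 1 := (div_lt_one hd0).2 hdθ
      set P : Measure X := ENNReal.ofReal (1 - t) • Q + ENNReal.ofReal t • R with hP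
      haveI hPprob : IsProbabilityMeasure P := by
        constructor
        simp only [hP, Measure.add_apply, Measure.smul_apply, smul_eq_mul, measure_univ, mul_one]
        rw [← ENNReal.ofReal_add (by linarith) (by linarith)]
        norm_num
      have hintP : ∫ x, Φ x ∂P = (1 - t) • (∫ x, Φ x ∂Q) + t • (∫ x, Φ x ∂ R) := by
        rw [hP, integral_add_measure
            (((hint Q inferInstance)).smul_measure ENNReal.ofReal_ne_top)
            (((hint R inferInstance)).smul_measure ENNReal.ofReal_ne_top),
          integral_smul_measure, integral_smul_measure,
          ENNReal.toReal_ofReal (by linarith), ENNReal.toReal_ofReal (by linarith)]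
      have hPQ : (∫ x, Φ x ∂P) - (∫ x, Φ x ∂Q) = t • ((∫ x, Φ x ∂ R) - (∫ x, Φ x ∂Q)) := by
        rw [hintP]; module
      have hRP : (∫ x, Φ x ∂ R) - (∫ x, Φ x ∂P) = (1 - t) • ((∫ x, Φ x ∂ R) - (∫ x, Φ x ∂Q)) := by
        rw [hintP]; module
      have hmem : ‖(∫ x, Φ x ∂P) - (∫ x, Φ x ∂Q)‖ ≤ θ := by
        rw [hPQ, norm_smul, Real.norm_of_nonneg ht0.le, ← hd, ht,
          div_mul_cancel₀ _ (ne_of_gt hd0)]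
      have : (⨅ P : ↥{P : Measure X | IsProbabilityMeasure P ∧ ‖(∫ x, Φ x ∂P) - (∫ x, Φ x ∂Q)‖ ≤ θ},
          ‖(∫ x, Φ x ∂ R) - (∫ x, Φ x ∂(P : Measure X))‖)
          ≤ ‖(∫ x, Φ x ∂ R) - (∫ x, Φ x ∂P)‖ :=
        ciInf_le hbdd ⟨P, ⟨hPprob, hmem⟩⟩
      calc _ ≤ ‖(∫ x, Φ x ∂ R) - (∫ x, Φ x ∂P)‖ := this
        _ = (1 - t) * d := by
            rw [hRP, norm_smul, Real.norm_of_nonneg (by linarith), hd]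
        _ = d - θ := by
            rw [ht]; field_simp
  · apply le_ciInf
    rintro ⟨P, hPprob, hPQ⟩
    apply max_le _ (norm_nonneg _)
    have htri : d ≤ ‖(∫ x, Φ x ∂ R) - (∫ x, Φ x ∂P)‖ + ‖(∫ x, Φ x ∂P) - (∫ x, Φ x ∂Q)‖ := by
      rw [hd]
      calc ‖(∫ x, Φ x ∂ R) - (∫ x, Φ x ∂Q)‖
          = ‖((∫ x, Φ x ∂ R) - (∫ x, Φ x ∂P)) + ((∫ x, Φ x ∂P) - (∫ x, Φ x ∂Q))‖ := by abel_nf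
        _ ≤ _ := norm_add_le _ _
    simp only
    linarith

lemma mmd_arith (d₀ d₁ D θ γ : ℝ) (hD : 2 * θ < D)
    (hγl : -D + 2 * θ < γ) (hγr : γ < D - 2 * θ)
    (htri : D ≤ d₀ + d₁) :
    (γ ≤ max (d₀ - θ) 0 - max (d₁ - θ) 0 ↔ γ ≤ d₀ - d₁) := by
  rcases le_or_gt θ d₀ with h₀ | h₀ <;> rcases le_or_gt θ d₁ with h₁ | h₁
  · rw [max_eq_left (by linarith), max_eq_left (by linarith)]
    constructor <;> intro <;> linarith
  · rw [max_eq_left (by linarith), max_eq_right (by linarith)]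
    constructor <;> intro <;> linarith
  · rw [max_eq_right (by linarith), max_eq_left (by linarith)]
    constructor <;> intro <;> linarith
  · linarith

/-- Equivalence of the robust kernel test statistic and the direct MMD comparison:
for `γ` in the stated interval, `(inf_{P∈𝒫₀}‖μ_R−μ_P‖) − (inf_{P∈𝒫₁}‖μ_R−μ_P‖) ≥ γ` iff
`‖μ_R−μ_{Q₀}‖ − ‖μ_R−μ_{Q₁}‖ ≥ γ`. -/
theorem stmt2
    {X H : Type*} [MeasurableSpace X]
    [NormedAddCommGroup H] [InnerProductSpace ℝ H] [CompleteSpace H]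
    (Φ : X → H) (hΦm : StronglyMeasurable Φ) (C : ℝ) (hΦb : ∀ x, ‖Φ x‖ ≤ C)
    (Q₀ Q₁ : Measure X) [IsProbabilityMeasure Q₀] [IsProbabilityMeasure Q₁]
    (θ : ℝ) (hθ : 0 < θ) :
    let μemb : Measure X → H := fun P => ∫ x, Φ x ∂P
    let 𝒫₀ : Set (Measure X) := {P | IsProbabilityMeasure P ∧ ‖μemb P - μemb Q₀‖ ≤ θ}
    let 𝒫₁ : Set (Measure X) := {P | IsProbabilityMeasure P ∧ ‖μemb P - μemb Q₁‖ ≤ θ}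
    2 * θ < ‖μemb Q₀ - μemb Q₁‖ →
    ∀ γ : ℝ, γ ∈ Set.Ioo (-‖μemb Q₀ - μemb Q₁‖ + 2 * θ) (‖μemb Q₀ - μemb Q₁‖ - 2 * θ) →
    ∀ R : Measure X, IsProbabilityMeasure R →
      (γ ≤ (⨅ P : ↥𝒫₀, ‖μemb R - μemb (P : Measure X)‖)
            - (⨅ P : ↥𝒫₁, ‖μemb R - μemb (P : Measure X)‖)
        ↔ γ ≤ ‖μemb R - μemb Q₀‖ - ‖μemb R - μemb Q₁‖) := by
  intro μemb 𝒫₀ 𝒫₁ hD γ hγ R hR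
  have h0 : (⨅ P : ↥𝒫₀, ‖μemb R - μemb (P : Measure X)‖)
      = max (‖μemb R - μemb Q₀‖ - θ) 0 := mmd_inf_eq Φ hΦm C hΦb Q₀ R θ hθ
  have h1 : (⨅ P : ↥𝒫₁, ‖μemb R - μemb (P : Measure X)‖)
      = max (‖μemb R - μemb Q₁‖ - θ) 0 := mmd_inf_eq Φ hΦm C hΦb Q₁ R θ hθ
  rw [h0, h1]
  have htri : ‖μemb Q₀ - μemb Q₁‖ ≤ ‖μemb R - μemb Q₀‖ + ‖μemb R - μemb Q₁‖ := by
    rw [show μemb Q₀ - μemb Q₁ = (μemb R - μemb Q₁) - (μemb R - μemb Q₀) by abel]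
    exact (norm_sub_le _ _).trans_eq (add_comm _ _)
  exact mmd_arith _ _ _ θ γ hD hγ.1 hγ.2 htri
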